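/- Let d ≥ 4 and let 𝔸_{d,2} be the space of skew-symmetric real d×d matrices with all row sums zero. If T : 𝔸_{d,2} → 𝔸_{d,2} is a linear map satisfying T(P_σ W P_σᵀ) = P_σ T(W) P_σᵀ for all σ ∈ S_d and all W ∈ 𝔸_{d,2}, then T is a scalar multiple of the identity. -/

import Mathlib

open Matrix

/-- The permutation matrix of `σ`. -/
def permMat {d : ℕ} (σ : Equiv.Perm (Fin d)) : Matrix (Fin d) (Fin d) ℝ :=
  Matrix.of fun i j => if σ j = i then (1 : ℝ) else 0

/-- `𝔸_{d,2}`: skew-symmetric matrices with all row sums zero. -/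
def Ad2 (d : ℕ) : Submodule ℝ (Matrix (Fin d) (Fin d) ℝ) where
  carrier := {A | Aᵀ = -A ∧ ∀ i, ∑ j, A i j = 0}
  zero_mem' := ⟨by simp, by simp⟩
  add_mem' := by
    rintro a b ⟨ha1, ha2⟩ ⟨hb1, hb2⟩
    refine ⟨by rw [Matrix.transpose_add, ha1, hb1, neg_add], fun i => ?_⟩
    simp [Matrix.add_apply, Finset.sum_add_distrib, ha2 i, hb2 i]
  smul_mem' := by
    rintro c a ⟨ha1, ha2⟩
    refine ⟨by rw [Matrix.transpose_smul, ha1, smul_neg], fun i => ?_⟩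
    simp [Matrix.smul_apply, ← Finset.mul_sum, ha2 i]

namespace Ad2aux

variable {d : ℕ}

/-- An indicator function. -/
def χ (a b : Fin d) : ℝ := if a = b then 1 else 0

lemma χ_sum (j : Fin d) : ∑ b, χ b j = 1 := by
  simp [χ, Finset.sum_ite_eq']

/-- The 3-cycle matrix supported on `{i,j,k}`. -/
def Xm (i j k : Fin d) : Matrix (Fin d) (Fin d) ℝ :=
  Matrix.of fun a b =>
    χ a i * χ b j + χ a j * χ b k + χ a k * χ b i
      - χ a j * χ b i - χ a k * χ b j - χ a i * χ b k

lemma Xm_mem (i j k : Fin d) : Xm i j k ∈ Ad2 d := by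
  constructor
  · ext a b
    simp only [transpose_apply, Matrix.neg_apply, Xm, of_apply]
    ring
  · intro a
    simp only [Xm, of_apply]
    simp only [Finset.sum_add_distrib, Finset.sum_sub_distrib, ← Finset.mul_sum, χ_sum]
    ring

lemma Xm_cyclic (i j k : Fin d) : Xm j k i = Xm i j k := by
  ext a b; simp only [Xm, of_apply]; ring

lemma Xm_swap (i j k : Fin d) : Xm j i k = -Xm i j k := by
  ext a b; simp only [Xm, of_apply, Matrix.neg_apply]; ring

lemma Xm_degen1 (i k : Fin d) : Xm i i k = 0 := by
  ext a b; simp only [Xm, of_apply, Matrix.zero_apply]; ring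
lemma Xm_degen2 (i j : Fin d) : Xm i j j = 0 := by
  ext a b; simp only [Xm, of_apply, Matrix.zero_apply]; ring
lemma Xm_degen3 (i j : Fin d) : Xm i j i = 0 := by
  ext a b; simp only [Xm, of_apply, Matrix.zero_apply]; ring

lemma conj_apply (σ : Equiv.Perm (Fin d)) (M : Matrix (Fin d) (Fin d) ℝ) (a b : Fin d) :
    (permMat σ * M * (permMat σ)ᵀ) a b = M (σ.symm a) (σ.symm b) := by
  simp only [mul_apply, permMat, of_apply, transpose_apply, ite_mul, one_mul, zero_mul,
    mul_ite, mul_one, mul_zero]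
  have h1 : ∀ x : Fin d, (σ x = a) = (x = σ.symm a) := fun x => by
    simp [Equiv.apply_eq_iff_eq_symm_apply]
  have h2 : ∀ y : Fin d, (σ y = b) = (y = σ.symm b) := fun y => by
    simp [Equiv.apply_eq_iff_eq_symm_apply]
  simp only [h1, h2]
  simp [Finset.sum_ite_eq']

lemma conjX (σ : Equiv.Perm (Fin d)) (i j k : Fin d) :
    permMat σ * Xm i j k * (permMat σ)ᵀ = Xm (σ i) (σ j) (σ k) := by
  ext a b
  rw [conj_apply]
  simp only [Xm, of_apply, χ, Equiv.symm_apply_eq]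

lemma pick {g f : Fin d → ℝ} {b : Fin d} (h : ∀ x, g x = if b = x then f x else 0) :
    ∑ x, g x = f b := by
  rw [Finset.sum_congr rfl fun x _ => h x]
  simp [Finset.sum_ite_eq]

lemma span_sum (p : Fin d) (W : Matrix (Fin d) (Fin d) ℝ)
    (hs : Wᵀ = -W) (hr : ∀ i, ∑ j, W i j = 0) :
    ∑ i, ∑ j, W i j • Xm p i j = (2:ℝ) • W := by
  have hW : ∀ a b, W b a = -W a b := fun a b => by
    have := congrFun (congrFun hs a) b; simpa using this
  have hc : ∀ j, ∑ i, W i j = 0 := fun j => by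
    have : ∑ i, W i j = -∑ i, W j i := by
      rw [← Finset.sum_neg_distrib]
      exact Finset.sum_congr rfl fun i _ => by rw [hW]
    rw [this, hr, neg_zero]
  ext a b
  simp only [Matrix.sum_apply, Matrix.smul_apply, smul_eq_mul, Xm, of_apply, χ]
  have key : ∀ i : Fin d, ∑ j : Fin d,
      W i j * ((if a = p then (1:ℝ) else 0) * (if b = i then 1 else 0)
        + (if a = i then 1 else 0) * (if b = j then 1 else 0)
        + (if a = j then 1 else 0) * (if b = p then 1 else 0)
        - (if a = i then 1 else 0) * (if b = p then 1 else 0)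
        - (if a = j then 1 else 0) * (if b = i then 1 else 0)
        - (if a = p then 1 else 0) * (if b = j then 1 else 0))
      = (if a = p then (1:ℝ) else 0) * (if b = i then 1 else 0) * (∑ j, W i j)
        + (if a = i then 1 else 0) * W i b
        + (if b = p then 1 else 0) * W i a
        - (if a = i then 1 else 0) * (if b = p then 1 else 0) * (∑ j, W i j)
        - (if b = i then 1 else 0) * W i a
        - (if a = p then 1 else 0) * W i b := by
    intro i
    simp only [mul_add, mul_sub, Finset.sum_add_distrib, Finset.sum_sub_distrib]
    congr 1
    congr 1
    congr 1
    congr 1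
    congr 1
    · rw [Finset.mul_sum]; exact Finset.sum_congr rfl fun j _ => by ring
    · exact pick (f := fun x => (if a = i then (1:ℝ) else 0) * W i x)
        fun x => by by_cases h : b = x <;> simp [h]
    · exact pick (b := a) (f := fun x => (if b = p then (1:ℝ) else 0) * W i x)
        fun x => by by_cases h : a = x <;> simp [h]
    · rw [Finset.mul_sum]; exact Finset.sum_congr rfl fun j _ => by ring
    · exact pick (b := a) (f := fun x => (if b = i then (1:ℝ) else 0) * W i x)
        fun x => by by_cases h : a = x <;> simp [h]
    · exact pick (f := fun x => (if a = p then (1:ℝ) else 0) * W i x)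
        fun x => by by_cases h : b = x <;> simp [h]
  rw [Finset.sum_congr rfl fun i _ => key i]
  simp only [hr, mul_zero, zero_mul, sub_zero, add_zero, zero_add,
    Finset.sum_add_distrib, Finset.sum_sub_distrib]
  have s1 : ∑ i, (if a = i then (1:ℝ) else 0) * W i b = W a b :=
    pick (b := a) (f := fun i => W i b) fun i => by by_cases h : a = i <;> simp [h]
  have s2 : ∑ i, (if b = p then (1:ℝ) else 0) * W i a = 0 := by
    rw [← Finset.mul_sum, hc, mul_zero]
  have s3 : ∑ i, (if b = i then (1:ℝ) else 0) * W i a = W b a :=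
    pick (f := fun i => W i a) fun i => by by_cases h : b = i <;> simp [h]
  have s4 : ∑ i, (if a = p then (1:ℝ) else 0) * W i b = 0 := by
    rw [← Finset.mul_sum, hc, mul_zero]
  rw [s1, s2, s3, s4, hW a b]
  ring

lemma scalar_of_values {A : Matrix (Fin d) (Fin d) ℝ} {e0 e1 e2 : Fin d} {c : ℝ}
    (h01 : e0 ≠ e1) (h02 : e0 ≠ e2) (h12 : e1 ≠ e2)
    (hskew : ∀ a b, A b a = -A a b)
    (f01 : c = A e0 e1) (f12 : A e1 e2 = c) (f20 : A e2 e0 = c)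
    (frow : ∀ b, b ≠ e0 → b ≠ e1 → b ≠ e2 → A e0 b = 0 ∧ A e1 b = 0 ∧ A e2 b = 0)
    (hout : ∀ a b, a ≠ e0 → a ≠ e1 → a ≠ e2 → b ≠ e0 → b ≠ e1 → b ≠ e2 → A a b = 0) :
    A = c • Xm e0 e1 e2 := by
  have fdiag : ∀ a, A a a = 0 := fun a => by have := hskew a a; linarith
  have f10 : A e1 e0 = -c := by rw [hskew, ← f01]
  have f21 : A e2 e1 = -c := by rw [hskew, f12]
  have f02 : A e0 e2 = -c := by rw [hskew, f20]
  have fcol : ∀ a, a ≠ e0 → a ≠ e1 → a ≠ e2 → A a e0 = 0 ∧ A a e1 = 0 ∧ A a e2 = 0 := by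
    intro a ha0 ha1 ha2
    obtain ⟨g1, g2, g3⟩ := frow a ha0 ha1 ha2
    exact ⟨by rw [hskew, g1, neg_zero], by rw [hskew, g2, neg_zero],
      by rw [hskew, g3, neg_zero]⟩
  have hχ1 : ∀ x : Fin d, χ x x = (1:ℝ) := fun x => if_pos rfl
  have hχ0 : ∀ x y : Fin d, x ≠ y → χ x y = (0:ℝ) := fun x y h => if_neg h
  ext a b
  simp only [Matrix.smul_apply, smul_eq_mul, Xm, of_apply]
  by_cases ha0 : a = e0
  · rw [ha0]
    by_cases hb0 : b = e0
    · rw [hb0]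
      simp only [hχ1, hχ0 _ _ h01, hχ0 _ _ h02, hχ0 _ _ h01.symm, hχ0 _ _ h02.symm]
      rw [fdiag]; ring
    by_cases hb1 : b = e1
    · rw [hb1]
      simp only [hχ1, hχ0 _ _ h01, hχ0 _ _ h02, hχ0 _ _ h12, hχ0 _ _ h01.symm,
        hχ0 _ _ h02.symm, hχ0 _ _ h12.symm]
      rw [← f01]; ring
    by_cases hb2 : b = e2
    · rw [hb2]
      simp only [hχ1, hχ0 _ _ h01, hχ0 _ _ h02, hχ0 _ _ h12, hχ0 _ _ h01.symm,
        hχ0 _ _ h02.symm, hχ0 _ _ h12.symm]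
      rw [f02]; ring
    · simp only [hχ1, hχ0 _ _ h01, hχ0 _ _ h02, hχ0 _ _ h01.symm, hχ0 _ _ h02.symm,
        hχ0 _ _ hb0, hχ0 _ _ hb1, hχ0 _ _ hb2]
      rw [(frow b hb0 hb1 hb2).1]; ring
  by_cases ha1 : a = e1
  · rw [ha1]
    by_cases hb0 : b = e0
    · rw [hb0]
      simp only [hχ1, hχ0 _ _ h01, hχ0 _ _ h02, hχ0 _ _ h12, hχ0 _ _ h01.symm,
        hχ0 _ _ h02.symm, hχ0 _ _ h12.symm]
      rw [f10]; ring
    by_cases hb1 : b = e1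
    · rw [hb1]
      simp only [hχ1, hχ0 _ _ h01, hχ0 _ _ h12, hχ0 _ _ h01.symm, hχ0 _ _ h12.symm]
      rw [fdiag]; ring
    by_cases hb2 : b = e2
    · rw [hb2]
      simp only [hχ1, hχ0 _ _ h01, hχ0 _ _ h02, hχ0 _ _ h12, hχ0 _ _ h01.symm,
        hχ0 _ _ h02.symm, hχ0 _ _ h12.symm]
      rw [f12]; ring
    · simp only [hχ1, hχ0 _ _ h01.symm, hχ0 _ _ h12, hχ0 _ _ hb0, hχ0 _ _ hb1,
        hχ0 _ _ hb2]
      rw [(frow b hb0 hb1 hb2).2.1]; ring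
  by_cases ha2 : a = e2
  · rw [ha2]
    by_cases hb0 : b = e0
    · rw [hb0]
      simp only [hχ1, hχ0 _ _ h01, hχ0 _ _ h02, hχ0 _ _ h12, hχ0 _ _ h01.symm,
        hχ0 _ _ h02.symm, hχ0 _ _ h12.symm]
      rw [f20]; ring
    by_cases hb1 : b = e1
    · rw [hb1]
      simp only [hχ1, hχ0 _ _ h01, hχ0 _ _ h02, hχ0 _ _ h12, hχ0 _ _ h01.symm,
        hχ0 _ _ h02.symm, hχ0 _ _ h12.symm]
      rw [f21]; ring
    by_cases hb2 : b = e2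
    · rw [hb2]
      simp only [hχ1, hχ0 _ _ h02, hχ0 _ _ h12, hχ0 _ _ h02.symm, hχ0 _ _ h12.symm]
      rw [fdiag]; ring
    · simp only [hχ1, hχ0 _ _ h02.symm, hχ0 _ _ h12.symm, hχ0 _ _ hb0, hχ0 _ _ hb1,
        hχ0 _ _ hb2]
      rw [(frow b hb0 hb1 hb2).2.2]; ring
  · by_cases hb0 : b = e0
    · rw [hb0]
      simp only [hχ1, hχ0 _ _ h01, hχ0 _ _ h02, hχ0 _ _ h01.symm, hχ0 _ _ h02.symm,
        hχ0 _ _ ha0, hχ0 _ _ ha1, hχ0 _ _ ha2]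
      rw [(fcol a ha0 ha1 ha2).1]; ring
    by_cases hb1 : b = e1
    · rw [hb1]
      simp only [hχ1, hχ0 _ _ h01.symm, hχ0 _ _ h12, hχ0 _ _ ha0, hχ0 _ _ ha1,
        hχ0 _ _ ha2]
      rw [(fcol a ha0 ha1 ha2).2.1]; ring
    by_cases hb2 : b = e2
    · rw [hb2]
      simp only [hχ1, hχ0 _ _ h02.symm, hχ0 _ _ h12.symm, hχ0 _ _ ha0, hχ0 _ _ ha1,
        hχ0 _ _ ha2]
      rw [(fcol a ha0 ha1 ha2).2.2]; ring
    · simp only [hχ0 _ _ ha0, hχ0 _ _ ha1, hχ0 _ _ ha2, hχ0 _ _ hb0, hχ0 _ _ hb1,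
        hχ0 _ _ hb2]
      rw [hout a b ha0 ha1 ha2 hb0 hb1 hb2]; ring

lemma exists_perm {e0 e1 e2 : Fin d} (h01 : e0 ≠ e1) (h02 : e0 ≠ e2) (h12 : e1 ≠ e2)
    {i j k : Fin d} (hij : i ≠ j) (hik : i ≠ k) (hjk : j ≠ k) :
    ∃ σ : Equiv.Perm (Fin d), σ e0 = i ∧ σ e1 = j ∧ σ e2 = k := by
  set s1 := Equiv.swap e0 i with hs1
  set s2 := Equiv.swap (s1 e1) j with hs2
  set s3 := Equiv.swap (s2 (s1 e2)) k with hs3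
  have h10 : s1 e0 = i := Equiv.swap_apply_left e0 i
  have h21 : s2 (s1 e1) = j := Equiv.swap_apply_left _ _
  have h32 : s3 (s2 (s1 e2)) = k := Equiv.swap_apply_left _ _
  have h2i : s2 i = i := by
    refine Equiv.swap_apply_of_ne_of_ne (fun h => ?_) hij
    exact h01 (s1.injective (by rw [h10, h]))
  have h3i : s3 i = i := by
    refine Equiv.swap_apply_of_ne_of_ne (fun h => ?_) hik
    exact h02 (s1.injective (s2.injective (by rw [h10, h2i, h])))
  have h3j : s3 j = j := by
    refine Equiv.swap_apply_of_ne_of_ne (fun h => ?_) hjk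
    exact h12 (s1.injective (s2.injective (by rw [h21, h])))
  exact ⟨s1.trans (s2.trans s3),
    by simp only [Equiv.trans_apply]; rw [h10, h2i, h3i],
    by simp only [Equiv.trans_apply]; rw [h21, h3j],
    by simp only [Equiv.trans_apply]; rw [h32]⟩

end Ad2aux

open Ad2aux

/-- for `d ≥ 4`, every `S_d`-equivariant linear endomorphism of
`𝔸_{d,2}` (for the diagonal action `W ↦ P_σ W P_σᵀ`) is a scalar multiple of the
identity. -/
theorem equivariant_endomorphism_Ad2_is_scalar (d : ℕ) (hd : 4 ≤ d)
    (T : ↥(Ad2 d) →ₗ[ℝ] ↥(Ad2 d))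
    (hT : ∀ (σ : Equiv.Perm (Fin d)) (W V : ↥(Ad2 d)),
      (V : Matrix (Fin d) (Fin d) ℝ) = permMat σ * (W : Matrix (Fin d) (Fin d) ℝ) * (permMat σ)ᵀ →
      (T V : Matrix (Fin d) (Fin d) ℝ) = permMat σ * (T W : Matrix (Fin d) (Fin d) ℝ) * (permMat σ)ᵀ) :
    ∃ c : ℝ, ∀ W : ↥(Ad2 d), T W = c • W := by
  -- three distinguished indices
  set e0 : Fin d := ⟨0, by omega⟩ with he0
  set e1 : Fin d := ⟨1, by omega⟩ with he1
  set e2 : Fin d := ⟨2, by omega⟩ with he2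
  have h01 : e0 ≠ e1 := by simp [he0, he1, Fin.ext_iff]
  have h02 : e0 ≠ e2 := by simp [he0, he2, Fin.ext_iff]
  have h12 : e1 ≠ e2 := by simp [he1, he2, Fin.ext_iff]
  set W0 : ↥(Ad2 d) := ⟨Xm e0 e1 e2, Xm_mem e0 e1 e2⟩ with hW0
  set A : Matrix (Fin d) (Fin d) ℝ := ((T W0 : ↥(Ad2 d)) : Matrix (Fin d) (Fin d) ℝ) with hA
  set c : ℝ := A e0 e1 with hc
  have hAskew : ∀ a b, A b a = -A a b := fun a b => by
    have h := (T W0).2.1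
    have := congrFun (congrFun h a) b
    simpa using this
  -- the 3-cycle ρ on e0 e1 e2
  set ρ : Equiv.Perm (Fin d) := (Equiv.swap e1 e2).trans (Equiv.swap e0 e1) with hρdef
  have hρ0 : ρ e0 = e1 := by
    simp only [hρdef, Equiv.trans_apply]
    rw [Equiv.swap_apply_of_ne_of_ne h01 h02, Equiv.swap_apply_left]
  have hρ1 : ρ e1 = e2 := by
    simp only [hρdef, Equiv.trans_apply]
    rw [Equiv.swap_apply_left, Equiv.swap_apply_of_ne_of_ne h02.symm h12.symm]
  have hρ2 : ρ e2 = e0 := by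
    simp only [hρdef, Equiv.trans_apply]
    rw [Equiv.swap_apply_right, Equiv.swap_apply_right]
  have hρo : ∀ x : Fin d, x ≠ e0 → x ≠ e1 → x ≠ e2 → ρ x = x := fun x hx0 hx1 hx2 => by
    simp only [hρdef, Equiv.trans_apply]
    rw [Equiv.swap_apply_of_ne_of_ne hx1 hx2, Equiv.swap_apply_of_ne_of_ne hx0 hx1]
  have hcoe : (W0 : Matrix (Fin d) (Fin d) ℝ) = Xm e0 e1 e2 := rfl
  -- equivariance under ρ
  have hRρ : A = permMat ρ * A * (permMat ρ)ᵀ := by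
    refine hT ρ W0 W0 ?_
    rw [hcoe, conjX, hρ0, hρ1, hρ2]
    exact (Xm_cyclic e0 e1 e2).symm
  have hρA : ∀ a b, A (ρ a) (ρ b) = A a b := fun a b => by
    conv_lhs => rw [hRρ]
    rw [conj_apply, Equiv.symm_apply_apply, Equiv.symm_apply_apply]
  -- equivariance under the transposition τ = swap e0 e1
  set τ : Equiv.Perm (Fin d) := Equiv.swap e0 e1 with hτdef
  have hτ0 : τ e0 = e1 := Equiv.swap_apply_left _ _
  have hτ1 : τ e1 = e0 := Equiv.swap_apply_right _ _
  have hτo : ∀ x : Fin d, x ≠ e0 → x ≠ e1 → τ x = x := fun x hx0 hx1 =>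
    Equiv.swap_apply_of_ne_of_ne hx0 hx1
  have hτ2 : τ e2 = e2 := hτo e2 h02.symm h12.symm
  have hVτ : ((-W0 : ↥(Ad2 d)) : Matrix (Fin d) (Fin d) ℝ)
      = permMat τ * (W0 : Matrix (Fin d) (Fin d) ℝ) * (permMat τ)ᵀ := by
    rw [hcoe, conjX, hτ0, hτ1, hτ2, Xm_swap]
    push_cast
    rfl
  have hRτ := hT τ W0 (-W0) hVτ
  have hTneg : ((T (-W0) : ↥(Ad2 d)) : Matrix (Fin d) (Fin d) ℝ) = -A := by
    rw [map_neg]; push_cast; rw [hA]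
  rw [hTneg] at hRτ
  have hRτ' : A = -(permMat τ * A * (permMat τ)ᵀ) := by
    rw [← hRτ, neg_neg]
  have hτA : ∀ a b, A (τ a) (τ b) = -A a b := fun a b => by
    conv_lhs => rw [hRτ']
    rw [Matrix.neg_apply, conj_apply, Equiv.symm_apply_apply, Equiv.symm_apply_apply]
  -- equivariance under transpositions away from {e0,e1,e2}
  have hout : ∀ a b : Fin d, a ≠ e0 → a ≠ e1 → a ≠ e2 → b ≠ e0 → b ≠ e1 → b ≠ e2 →
      A a b = 0 := by
    intro a b ha0 ha1 ha2 hb0 hb1 hb2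
    by_cases hab : a = b
    · subst hab
      have := hAskew a a; linarith
    · set s : Equiv.Perm (Fin d) := Equiv.swap a b with hsdef
      have hR : A = permMat s * A * (permMat s)ᵀ := by
        refine hT s W0 W0 ?_
        rw [hcoe, conjX,
          Equiv.swap_apply_of_ne_of_ne (fun h => ha0 h.symm) (fun h => hb0 h.symm),
          Equiv.swap_apply_of_ne_of_ne (fun h => ha1 h.symm) (fun h => hb1 h.symm),
          Equiv.swap_apply_of_ne_of_ne (fun h => ha2 h.symm) (fun h => hb2 h.symm)]
      have h1 : A a b = A b a := by
        conv_lhs => rw [hR]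
        rw [conj_apply, Equiv.symm_swap, Equiv.swap_apply_left, Equiv.swap_apply_right]
      have := hAskew a b
      linarith
  -- entry values
  have fdiag : ∀ a, A a a = 0 := fun a => by have := hAskew a a; linarith
  have f12 : A e1 e2 = c := by rw [← hρ0, ← hρ1, hρA]
  have f20 : A e2 e0 = c := by rw [← hρ1, ← hρ2, hρA, f12]
  have f10 : A e1 e0 = -c := by rw [hAskew]
  have f21 : A e2 e1 = -c := by rw [hAskew, f12]
  have f02 : A e0 e2 = -c := by rw [hAskew, f20]
  have frow : ∀ b : Fin d, b ≠ e0 → b ≠ e1 → b ≠ e2 →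
      A e0 b = 0 ∧ A e1 b = 0 ∧ A e2 b = 0 := by
    intro b hb0 hb1 hb2
    have h1 : A e1 b = A e0 b := by
      conv_lhs => rw [← hρ0, ← hρo b hb0 hb1 hb2]
      exact hρA e0 b
    have h2 : A e1 b = -A e0 b := by
      conv_lhs => rw [← hτ0, ← hτo b hb0 hb1]
      exact hτA e0 b
    have h3 : A e0 b = 0 := by linarith
    have h4 : A e1 b = 0 := by linarith
    have h5 : A e2 b = 0 := by
      conv_lhs => rw [← hρ1, ← hρo b hb0 hb1 hb2]
      rw [hρA]; exact h4
    exact ⟨h3, h4, h5⟩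
  have fcol : ∀ a : Fin d, a ≠ e0 → a ≠ e1 → a ≠ e2 →
      A a e0 = 0 ∧ A a e1 = 0 ∧ A a e2 = 0 := by
    intro a ha0 ha1 ha2
    obtain ⟨g1, g2, g3⟩ := frow a ha0 ha1 ha2
    exact ⟨by rw [hAskew, g1, neg_zero], by rw [hAskew, g2, neg_zero],
      by rw [hAskew, g3, neg_zero]⟩
  have hAc : A = c • Xm e0 e1 e2 :=
    scalar_of_values h01 h02 h12 hAskew rfl f12 f20 frow hout
  -- T on every 3-cycle matrix is scaling by c
  have key : ∀ i j k : Fin d,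
      ((T ⟨Xm i j k, Xm_mem i j k⟩ : ↥(Ad2 d)) : Matrix (Fin d) (Fin d) ℝ) = c • Xm i j k := by
    intro i j k
    by_cases hij : i = j
    · subst hij
      have hz : (⟨Xm i i k, Xm_mem i i k⟩ : ↥(Ad2 d)) = 0 := by
        apply Subtype.coe_injective; simp [Xm_degen1]
      rw [hz, map_zero, Xm_degen1]
      simp
    by_cases hjk : j = k
    · subst hjk
      have hz : (⟨Xm i j j, Xm_mem i j j⟩ : ↥(Ad2 d)) = 0 := by
        apply Subtype.coe_injective; simp [Xm_degen2]
      rw [hz, map_zero, Xm_degen2]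
      simp
    by_cases hik : i = k
    · subst hik
      have hz : (⟨Xm i j i, Xm_mem i j i⟩ : ↥(Ad2 d)) = 0 := by
        apply Subtype.coe_injective; simp [Xm_degen3]
      rw [hz, map_zero, Xm_degen3]
      simp
    obtain ⟨σ, hσ0, hσ1, hσ2⟩ := exists_perm h01 h02 h12 hij hik hjk
    have h := hT σ W0 ⟨Xm i j k, Xm_mem i j k⟩ ?_
    · rw [h, ← hA, hAc, Matrix.mul_smul, Matrix.smul_mul, conjX, hσ0, hσ1, hσ2]
    · rw [hcoe, conjX, hσ0, hσ1, hσ2]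
  -- conclude
  refine ⟨c, fun W => ?_⟩
  have hWprop := W.2
  have hWrep : W = ∑ i, ∑ j, (((W : Matrix (Fin d) (Fin d) ℝ) i j) / 2) •
      (⟨Xm e0 i j, Xm_mem e0 i j⟩ : ↥(Ad2 d)) := by
    apply Subtype.coe_injective
    push_cast
    have hs := span_sum e0 (W : Matrix (Fin d) (Fin d) ℝ) hWprop.1 hWprop.2
    have h2 : ∑ i, ∑ j, (((W : Matrix (Fin d) (Fin d) ℝ) i j) / 2) • Xm e0 i j
        = (2⁻¹ : ℝ) • ∑ i, ∑ j, ((W : Matrix (Fin d) (Fin d) ℝ) i j) • Xm e0 i j := by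
      rw [Finset.smul_sum]
      refine Finset.sum_congr rfl fun i _ => ?_
      rw [Finset.smul_sum]
      refine Finset.sum_congr rfl fun j _ => ?_
      rw [smul_smul]
      congr 1
      ring
    rw [h2, hs, smul_smul]
    norm_num
  calc T W = T (∑ i, ∑ j, (((W : Matrix (Fin d) (Fin d) ℝ) i j) / 2) •
      (⟨Xm e0 i j, Xm_mem e0 i j⟩ : ↥(Ad2 d))) := by rw [← hWrep]
    _ = ∑ i, ∑ j, (((W : Matrix (Fin d) (Fin d) ℝ) i j) / 2) •
        T ⟨Xm e0 i j, Xm_mem e0 i j⟩ := by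
        simp only [map_sum, _root_.map_smul]
    _ = ∑ i, ∑ j, (((W : Matrix (Fin d) (Fin d) ℝ) i j) / 2) •
        (c • (⟨Xm e0 i j, Xm_mem e0 i j⟩ : ↥(Ad2 d))) := by
        refine Finset.sum_congr rfl fun i _ => Finset.sum_congr rfl fun j _ => ?_
        have hk : T ⟨Xm e0 i j, Xm_mem e0 i j⟩
            = c • (⟨Xm e0 i j, Xm_mem e0 i j⟩ : ↥(Ad2 d)) := by
          apply Subtype.coe_injective
          push_cast
          exact key e0 i j
        rw [hk]
    _ = c • ∑ i, ∑ j, (((W : Matrix (Fin d) (Fin d) ℝ) i j) / 2) •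
        (⟨Xm e0 i j, Xm_mem e0 i j⟩ : ↥(Ad2 d)) := by
        rw [Finset.smul_sum]
        refine Finset.sum_congr rfl fun i _ => ?_
        rw [Finset.smul_sum]
        refine Finset.sum_congr rfl fun j _ => ?_
        rw [smul_comm]
    _ = c • W := by rw [← hWrep]
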